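/- Let $R$ be a commutative ring, $\pi \in R$ a non-zero divisor, and for each $n \geq 1$ let $M_n$ be a flat $R/(\pi^n)$-module, with surjective transition maps $M_{n+1} \to M_n$ identifying $M_n \cong M_{n+1}/\pi^n M_{n+1}$. Then multiplication by $\pi$ is injective on $M = \lim_n M_n$ and $M/\pi M \cong M_1$. -/

import Mathlib

open Pointwise

/-- For a flat module `N` over `A`, the `a`-torsion of `N` is contained in
`ann(a) • N`. -/
lemma flat_torsion_le {A : Type} [CommRing A] {N : Type} [AddCommGroup N] [Module A N]
    [Module.Flat A N] (a : A) (x : N) (hx : a • x = 0) :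
    x ∈ (LinearMap.ker (LinearMap.lsmul A A a)) • (⊤ : Submodule A N) := by
  set I := LinearMap.ker (LinearMap.lsmul A A a) with hI
  have hexact : Function.Exact I.subtype (LinearMap.lsmul A A a) := by
    rw [LinearMap.exact_iff, Submodule.range_subtype]
  have h2 := Module.Flat.lTensor_exact N hexact
  have hk : (LinearMap.lsmul A A a).lTensor N (x ⊗ₜ[A] (1 : A)) = 0 := by
    have h1 : x ⊗ₜ[A] (a • (1 : A)) = (a • x) ⊗ₜ[A] (1 : A) := by
      rw [TensorProduct.tmul_smul, TensorProduct.smul_tmul']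
    simp only [LinearMap.lTensor_tmul, LinearMap.lsmul_apply, smul_eq_mul, mul_one]
    have : a ⊗ₜ[A] x = 0 → True := fun _ => trivial
    calc x ⊗ₜ[A] a = x ⊗ₜ[A] (a • (1 : A)) := by rw [smul_eq_mul, mul_one]
    _ = (a • x) ⊗ₜ[A] (1 : A) := h1
    _ = 0 := by rw [hx, TensorProduct.zero_tmul]
  obtain ⟨y, hy⟩ := (h2 (x ⊗ₜ[A] (1 : A))).mp hk
  have hx' : x = (TensorProduct.rid A N) ((I.subtype).lTensor N y) := by
    rw [hy]; simp
  rw [hx']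
  clear hx' hy hk
  induction y using TensorProduct.induction_on with
  | zero => simp
  | tmul n i =>
      simp only [LinearMap.lTensor_tmul, Submodule.coe_subtype, TensorProduct.rid_tmul]
      exact Submodule.smul_mem_smul i.2 trivial
  | add y z hy hz =>
      rw [map_add, map_add]
      exact Submodule.add_mem _ hy hz

/-- The limit `lim_n M_n` of an inverse system of modules, realized as the submodule of
compatible families in the product.  Here `M n` plays the role of `M_{n+1}`. -/
def invLimit {R : Type} [CommRing R] (M : ℕ → Type)
    [∀ n, AddCommGroup (M n)] [∀ n, Module R (M n)]
    (t : ∀ n, M (n + 1) →ₗ[R] M n) : Submodule R (∀ n, M n) where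
  carrier := {f | ∀ n, t n (f (n + 1)) = f n}
  add_mem' {f g} hf hg n := by simp [map_add, hf n, hg n]
  zero_mem' n := by simp
  smul_mem' r f hf n := by simp [map_smul, hf n]

/-- Let `π ∈ R` be a non-zero divisor and `(M_n)_{n ≥ 1}` an inverse
system where `M_n` is a flat `R/(π^n)`-module, with surjective transition maps
`M_{n+1} → M_n` whose kernel is `π^n M_{n+1}` (i.e. identifying `M_n ≅ M_{n+1}/π^n`).
Then multiplication by `π` is injective on `M = lim_n M_n`, and the projection
`M → M_1` is surjective with kernel `πM`, i.e. `M/πM ≅ M_1`.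
(Indexing: `M n` is `M_{n+1}`.) -/
theorem stmt_15 {R : Type} [CommRing R] (π : R) (hπ : π ∈ nonZeroDivisors R)
    (M : ℕ → Type) [∀ n, AddCommGroup (M n)] [∀ n, Module R (M n)]
    [Mod : ∀ n, Module (R ⧸ Ideal.span {π ^ (n + 1)}) (M n)]
    (hsc : ∀ n (r : R) (x : M n),
      (Ideal.Quotient.mk (Ideal.span {π ^ (n + 1)}) r) • x = r • x)
    (hflat : ∀ n, Module.Flat (R ⧸ Ideal.span {π ^ (n + 1)}) (M n))
    (t : ∀ n, M (n + 1) →ₗ[R] M n)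
    (hsurj : ∀ n, Function.Surjective (t n))
    (hker : ∀ n, LinearMap.ker (t n) =
      (π ^ (n + 1)) • (⊤ : Submodule R (M (n + 1)))) :
    (∀ x : invLimit M t, π • x = 0 → x = 0) ∧
      Function.Surjective (fun x : invLimit M t => (x : ∀ n, M n) 0) ∧
      (∀ x : invLimit M t, (x : ∀ n, M n) 0 = 0 ↔
        x ∈ π • (⊤ : Submodule R (invLimit M t))) := by
  -- `M n` is killed by `π ^ (n+1)`
  have kill : ∀ n (x : M n), (π ^ (n + 1)) • x = 0 := by
    intro n x
    rw [← hsc]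
    have h : (Ideal.Quotient.mk (Ideal.span {π ^ (n + 1)}) (π ^ (n + 1))) = 0 := by
      rw [Ideal.Quotient.eq_zero_iff_mem]
      exact Ideal.mem_span_singleton_self _
    rw [h, zero_smul]
  -- key flatness fact: the π-torsion of `M n` is contained in `π^n • M n`
  have key : ∀ n (x : M n), π • x = 0 → ∃ y : M n, x = (π ^ n) • y := by
    intro n x hx
    haveI := hflat n
    set A := R ⧸ Ideal.span {π ^ (n + 1)} with hA
    set mk := Ideal.Quotient.mk (Ideal.span {π ^ (n + 1)}) with hmk
    have hx' : (mk π) • x = 0 := by rw [hsc]; exact hx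
    have h := flat_torsion_le (mk π) x hx'
    have hle : (LinearMap.ker (LinearMap.lsmul A A (mk π)))
        ≤ Ideal.span {mk (π ^ n)} := by
      intro c hc
      obtain ⟨r, rfl⟩ := Ideal.Quotient.mk_surjective c
      have hc' : mk (π * r) = 0 := by
        have h1 := (LinearMap.mem_ker).mp hc
        simpa [map_mul] using h1
      rw [Ideal.Quotient.eq_zero_iff_mem, Ideal.mem_span_singleton'] at hc'
      obtain ⟨s, hs⟩ := hc'
      have h0 : (r - s * π ^ n) * π = 0 := by
        have h2 : s * π ^ n * π = π * r := by rw [mul_assoc, ← pow_succ]; exact hs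
        rw [sub_mul, h2]; ring
      have hr : r = s * π ^ n := sub_eq_zero.mp (hπ.2 _ h0)
      rw [Ideal.mem_span_singleton]
      exact ⟨mk s, by rw [← map_mul]; congr 1; rw [hr]; ring⟩
    have h2 : x ∈ (Ideal.span {mk (π ^ n)}) • (⊤ : Submodule A (M n)) :=
      Submodule.smul_mono hle le_rfl h
    rw [Submodule.ideal_span_singleton_smul] at h2
    obtain ⟨y, -, hy⟩ := Set.mem_smul_set.mp h2
    exact ⟨y, by rw [← hy, hsc]⟩
  refine ⟨?_, ?_, ?_⟩
  · -- injectivity of π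
    intro x hx
    have hc : ∀ m, t m ((x : ∀ n, M n) (m + 1)) = (x : ∀ n, M n) m := x.2
    have hx' : ∀ n, π • (x : ∀ n, M n) n = 0 := by
      intro n
      have h1 := congrFun (congrArg (Subtype.val) hx) n
      simpa using h1
    apply Subtype.ext; funext n
    obtain ⟨y, hy⟩ := key (n + 1) ((x : ∀ n, M n) (n + 1)) (hx' (n + 1))
    have h2 : (x : ∀ n, M n) n = (π ^ (n + 1)) • (t n y) := by
      rw [← hc n, hy, map_smul]
    show (x : ∀ n, M n) n = 0
    rw [h2, kill]
  · -- surjectivity onto M 0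
    intro y0
    refine ⟨⟨fun n => Nat.rec y0 (fun k gk => (hsurj k gk).choose) n,
      fun n => (hsurj n _).choose_spec⟩, rfl⟩
  · -- kernel
    intro x
    have hc : ∀ m, t m ((x : ∀ n, M n) (m + 1)) = (x : ∀ n, M n) m := x.2
    constructor
    · intro h0
      have stepA : ∀ n, ∃ y : M n, π • y = (x : ∀ n, M n) n := by
        intro n
        induction n with
        | zero => exact ⟨0, by rw [smul_zero, h0]⟩
        | succ n ih =>
          obtain ⟨y, hy⟩ := ih
          obtain ⟨z, hz⟩ := hsurj n y
          have hmem : (x : ∀ n, M n) (n + 1) - π • z ∈ LinearMap.ker (t n) := by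
            rw [LinearMap.mem_ker, map_sub, map_smul, hz, hy, hc n, sub_self]
          rw [hker n] at hmem
          obtain ⟨u, -, hu⟩ := Set.mem_smul_set.mp hmem
          refine ⟨z + (π ^ n) • u, ?_⟩
          have h3 : π • ((π ^ n) • u) = (π ^ (n + 1)) • u := by
            rw [smul_smul, ← pow_succ']
          rw [smul_add, h3, hu, add_sub_cancel]
      choose w hw using fun n => stepA (n + 1)
      have compat : ∀ n, t n (t (n + 1) (w (n + 1))) = t n (w n) := by
        intro n
        have hd : π • (t (n + 1) (w (n + 1)) - w n) = 0 := by
          rw [smul_sub, ← map_smul, hw, hw, hc (n + 1), sub_self]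
        obtain ⟨u, hu⟩ := key (n + 1) _ hd
        have h4 : t n (t (n + 1) (w (n + 1)) - w n) = 0 := by
          rw [hu, map_smul, kill]
        rw [map_sub, sub_eq_zero] at h4
        exact h4
      have hy : (fun n => t n (w n)) ∈ invLimit M t := compat
      have hxy : x = π • (⟨fun n => t n (w n), hy⟩ : invLimit M t) := by
        apply Subtype.ext; funext n
        show (x : ∀ n, M n) n = π • (t n (w n))
        rw [← map_smul, hw n, hc n]
      rw [hxy]
      exact Submodule.smul_mem_pointwise_smul _ π ⊤ trivial
    · intro h
      obtain ⟨y, -, rfl⟩ := Set.mem_smul_set.mp h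
      show π • ((y : invLimit M t) : ∀ n, M n) 0 = 0
      have h1 := kill 0 (((y : invLimit M t) : ∀ n, M n) 0)
      rwa [pow_one] at h1
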